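/- Under the LION setup with filtration (F_k) (Assumptions below) and with ηλ ≤ 1, define δ^k = c^k − ∇f(θ^k). Then for every k ≥ 1: E[‖δ^k‖₂] ≤ β₂^{k-1} σ + 2Lη√d/(1 − β₂) + (|β₁ − β₂| + 1 − β₁) · σ/√(1 − β₂). -/

import Mathlib

open MeasureTheory Real Finset

local notation "⟪" x ", " y "⟫" => @inner ℝ _ _ x y

/-- componentwise sign map, with sign 0 = 0. -/
noncomputable def signVec {d : ℕ} (x : EuclideanSpace ℝ (Fin d)) : EuclideanSpace ℝ (Fin d) :=
  (EuclideanSpace.equiv (Fin d) ℝ).symm fun i => Real.sign (x i)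

/-- the ℓ∞ norm on ℝ^d. -/
noncomputable def linfNorm {d : ℕ} (x : EuclideanSpace ℝ (Fin d)) : ℝ :=
  ‖EuclideanSpace.equiv (Fin d) ℝ x‖

/-- the ℓ1 norm on ℝ^d. -/
noncomputable def l1Norm {d : ℕ} (x : EuclideanSpace ℝ (Fin d)) : ℝ :=
  ∑ i, |x i|

/-! ### Auxiliary material -/

/-- auxiliary process: exponential moving average of the noise. -/
noncomputable def Wp {d : ℕ} {Ω : Type*} (β₂ : ℝ) (ξ : ℕ → Ω → EuclideanSpace ℝ (Fin d)) :
    ℕ → Ω → EuclideanSpace ℝ (Fin d)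
  | 0 => ξ 1
  | (k+1) => fun ω => β₂ • Wp β₂ ξ k ω + (1 - β₂) • ξ (k+1) ω

lemma sign_abs_le (r : ℝ) : |Real.sign r| ≤ 1 := by
  rcases Real.sign_apply_eq r with h|h|h <;> rw [h] <;> norm_num

lemma measurable_realSign : Measurable Real.sign := by
  unfold Real.sign
  exact Measurable.ite (measurableSet_lt measurable_id measurable_const) measurable_const
    (Measurable.ite (measurableSet_lt measurable_const measurable_id) measurable_const
      measurable_const)

lemma signVec_apply {d : ℕ} (x : EuclideanSpace ℝ (Fin d)) (i : Fin d) :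
    signVec x i = Real.sign (x i) := rfl

lemma measurable_signVec {d : ℕ} : Measurable (signVec (d := d)) := by
  unfold signVec
  exact (EuclideanSpace.equiv (Fin d) ℝ).symm.continuous.measurable.comp
    (measurable_pi_lambda _ fun i =>
      measurable_realSign.comp (EuclideanSpace.proj (𝕜 := ℝ) (ι := Fin d) i).continuous.measurable)

lemma euclid_norm_le_of_coord {d : ℕ} (y : EuclideanSpace ℝ (Fin d)) (b : ℝ) (hb : 0 ≤ b)
    (h : ∀ i, |y i| ≤ b) : ‖y‖ ≤ Real.sqrt d * b := by
  rw [EuclideanSpace.norm_eq]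
  rw [← Real.sqrt_sq hb, ← Real.sqrt_mul (by positivity)]
  apply Real.sqrt_le_sqrt
  calc ∑ i, ‖y i‖ ^ 2 ≤ ∑ _i : Fin d, b ^ 2 := by
        apply Finset.sum_le_sum
        intro i _
        have h2 : ‖y i‖ ≤ b := by rw [Real.norm_eq_abs]; exact h i
        nlinarith [norm_nonneg (y i)]
    _ = d * b ^ 2 := by simp [mul_comm]

/-- conditional expectation commutes with a continuous linear map. -/
lemma condexp_clm {Ω : Type*} {m m0 : MeasurableSpace Ω} (hm : m ≤ m0) {μ : Measure Ω}
    [IsFiniteMeasure μ] {F G : Type*}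
    [NormedAddCommGroup F] [NormedSpace ℝ F] [CompleteSpace F]
    [NormedAddCommGroup G] [NormedSpace ℝ G] [CompleteSpace G]
    (T : F →L[ℝ] G) {Y : Ω → F} (hY : Integrable Y μ) :
    (fun ω => T ((μ[Y|m]) ω)) =ᵐ[μ] μ[fun ω => T (Y ω)|m] := by
  apply ae_eq_condExp_of_forall_setIntegral_eq hm (T.integrable_comp hY)
  · intro s _ _
    exact (T.integrable_comp integrable_condExp).integrableOn
  · intro s hs hμs
    rw [T.integral_comp_comm integrable_condExp.integrableOn,
      T.integral_comp_comm hY.integrableOn, setIntegral_condExp hm hY hs]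
  · exact StronglyMeasurable.aestronglyMeasurable
      (T.continuous.comp_stronglyMeasurable stronglyMeasurable_condExp)

/-- Cauchy–Schwarz / Jensen : first moment bounded by root of the second moment. -/
lemma integral_norm_le_sqrt_integral_sq {Ω : Type*} [MeasurableSpace Ω] {P : Measure Ω}
    [IsProbabilityMeasure P] {F : Type*} [NormedAddCommGroup F] {X : Ω → F}
    (hX : MemLp X 2 P) : ∫ ω, ‖X ω‖ ∂P ≤ Real.sqrt (∫ ω, ‖X ω‖^2 ∂P) := by
  have h1 : Integrable (fun ω => ‖X ω‖) P := (hX.integrable one_le_two).norm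
  have h2 : Integrable (fun ω => ‖X ω‖^2) P := hX.norm.integrable_sq
  set μ1 := ∫ ω, ‖X ω‖ ∂P with hμ1
  have hμ0 : 0 ≤ μ1 := integral_nonneg fun ω => norm_nonneg _
  have key : 0 ≤ ∫ ω, (‖X ω‖ - μ1)^2 ∂P := integral_nonneg fun ω => sq_nonneg _
  have expand : ∫ ω, (‖X ω‖ - μ1)^2 ∂P
      = (∫ ω, ‖X ω‖^2 ∂P) - (2*μ1)*μ1 + μ1^2 := by
    have e : (fun ω => (‖X ω‖ - μ1)^2) = fun ω => (‖X ω‖^2 - (2*μ1)*‖X ω‖) + μ1^2 := by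
      funext ω; ring
    have h3 : Integrable (fun ω => ‖X ω‖^2 - (2*μ1)*‖X ω‖) P := h2.sub (h1.const_mul _)
    rw [e, integral_add h3 (integrable_const _),
      integral_sub h2 (h1.const_mul _), integral_const_mul, integral_const]
    simp
    exact Or.inl hμ1.symm
  have hsq : μ1^2 ≤ ∫ ω, ‖X ω‖^2 ∂P := by nlinarith [key, expand]
  calc μ1 = Real.sqrt (μ1^2) := (Real.sqrt_sq hμ0).symm
    _ ≤ Real.sqrt (∫ ω, ‖X ω‖^2 ∂P) := Real.sqrt_le_sqrt hsq

set_option maxHeartbeats 1000000 in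
lemma key_scalar_ineq (β₁ β₂ q : ℝ) (h10 : 0 < β₁) (h11 : β₁ < 1) (h20 : 0 < β₂)
    (h21 : β₂ < 1) (hq0 : 0 < q) (hq1 : q ≤ 1) :
    Real.sqrt (β₁^2*(q^2 + (1-β₂)/(1+β₂)*(1-q^2)) + (1-β₁)^2) ≤
      β₂*q + (|β₁-β₂| + 1 - β₁)/Real.sqrt (1-β₂) := by
  set s := Real.sqrt (1-β₂) with hs
  have hs0 : 0 < s := Real.sqrt_pos.2 (by linarith)
  have hs2 : s^2 = 1-β₂ := Real.sq_sqrt (by linarith)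
  have hs1 : s ≤ 1 := by nlinarith
  have ha : 1 - β₂ ≤ |β₁-β₂| + 1 - β₁ := by
    rcases le_or_gt β₂ β₁ with h|h
    · rw [abs_of_nonneg (by linarith)]; linarith
    · rw [abs_of_neg (by linarith)]; linarith
  set T := (|β₁-β₂| + 1 - β₁)/s with hT
  have hT0 : 0 ≤ T := div_nonneg (by linarith) hs0.le
  have hRHS0 : 0 ≤ β₂*q + T := by nlinarith
  have hTs : T * s = |β₁-β₂| + 1 - β₁ := by
    rw [hT, div_mul_cancel₀ _ hs0.ne']
  have hTges : s ≤ T := by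
    rw [hT, le_div_iff₀ hs0]; nlinarith
  rw [show β₂*q + T = Real.sqrt ((β₂*q + T)^2) from (Real.sqrt_sq hRHS0).symm]
  apply Real.sqrt_le_sqrt
  set D := (1-β₂)/(1+β₂) with hD
  have hb2 : (0:ℝ) < 1 + β₂ := by linarith
  have hDe : D*(1+β₂) = 1-β₂ := by rw [hD, div_mul_cancel₀ _ hb2.ne']
  have hD0 : 0 ≤ D := div_nonneg (by linarith) (by linarith)
  have h1D : (1-D)*(1+β₂) = 2*β₂ := by linear_combination -hDe
  have h2s : 2*β₁^2 ≤ (2*s+β₂)*(1+β₂) := by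
    nlinarith [mul_nonneg (mul_nonneg hs0.le (sub_nonneg.2 hs1))
      (show (0:ℝ) ≤ 4+s-s^2 by nlinarith), sq_nonneg (1-β₁)]
  have hsq2 : s*q^2 ≤ T*q := by
    nlinarith [mul_le_mul_of_nonneg_right hTges (sq_nonneg q),
      mul_le_mul_of_nonneg_left (show q^2 ≤ q by nlinarith) hT0]
  have hpart1 : β₁^2*(1-D)*q^2 ≤ β₂^2*q^2 + 2*(β₂*q)*T := by
    apply le_of_mul_le_mul_right _ hb2
    have e1 : β₁^2*(1-D)*q^2*(1+β₂) = 2*β₂*β₁^2*q^2 := by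
      linear_combination β₁^2*q^2*h1D
    have e2 : 2*β₂*β₁^2*q^2 ≤ (2*s+β₂)*(1+β₂)*(β₂*q^2) := by
      have := mul_le_mul_of_nonneg_right h2s (show (0:ℝ) ≤ β₂*q^2 by positivity)
      linarith
    have e3 : (2*s+β₂)*(1+β₂)*(β₂*q^2) ≤ (β₂^2*q^2 + 2*(β₂*q)*T)*(1+β₂) := by
      have h5 : 2*β₂*(s*q^2) ≤ 2*β₂*(T*q) :=
        mul_le_mul_of_nonneg_left hsq2 (by linarith)
      nlinarith [h5, hb2]
    linarith [e1, e2, e3]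
  have hpart2 : β₁^2*D + (1-β₁)^2 ≤ T^2 := by
    rcases le_or_gt β₂ β₁ with h|h
    · have habs : |β₁-β₂| = β₁-β₂ := abs_of_nonneg (by linarith)
      rw [habs] at hTs
      have hTT : 1-β₂ ≤ T^2 := by nlinarith [mul_le_mul hTges hTges hs0.le hT0, hs2]
      have step : β₁^2*D + (1-β₁)^2 ≤ 1-β₂ := by
        apply le_of_mul_le_mul_right _ hb2
        have e : (β₁^2*D + (1-β₁)^2)*(1+β₂) = β₁^2*(1-β₂) + (1-β₁)^2*(1+β₂) := by
          linear_combination β₁^2*hDe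
        nlinarith [e, mul_nonneg (sub_nonneg.2 h) (sub_nonneg.2 h11.le)]
      linarith
    · have habs : |β₁-β₂| = β₂-β₁ := by
        rw [abs_of_neg (show β₁-β₂ < 0 by linarith)]; ring
      rw [habs] at hTs
      have hT2 : T^2*(1-β₂) = (β₂-β₁+1-β₁)^2 := by
        linear_combination (T*s + (β₂-β₁+1-β₁))*hTs - T^2*hs2
      have key : β₁^2*(1-β₂)^2 + (1-β₁)^2*((1-β₂)*(1+β₂)) ≤ (β₂-β₁+1-β₁)^2*(1+β₂) := by
        nlinarith [mul_nonneg (mul_nonneg (sub_pos.2 h).le (show (0:ℝ) ≤ 1-β₂ by linarith))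
            (show (0:ℝ) ≤ 2+6*β₂ by linarith),
          mul_nonneg (mul_nonneg (sub_pos.2 h).le (sub_pos.2 h).le)
            (show (0:ℝ) ≤ 2+6*β₂ by linarith),
          mul_nonneg (mul_nonneg (show (0:ℝ) ≤ 1-β₂ by linarith)
            (show (0:ℝ) ≤ 1-β₂ by linarith)) h20.le]
      apply le_of_mul_le_mul_right _ (show (0:ℝ) < (1-β₂)*(1+β₂) by nlinarith)
      calc (β₁^2*D + (1-β₁)^2)*((1-β₂)*(1+β₂))
          = β₁^2*(1-β₂)^2 + (1-β₁)^2*((1-β₂)*(1+β₂)) := by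
            linear_combination β₁^2*(1-β₂)*hDe
        _ ≤ (β₂-β₁+1-β₁)^2*(1+β₂) := key
        _ = T^2*((1-β₂)*(1+β₂)) := by linear_combination -(1+β₂)*hT2
  nlinarith [hpart1, hpart2]

set_option maxHeartbeats 2000000 in
theorem lion_bounding_lemma_pointwise {d : ℕ} (hd : 1 ≤ d) (f : EuclideanSpace ℝ (Fin d) → ℝ) (L : ℝ)
    (hf : Differentiable ℝ f)
    (hL : ∀ x y, ‖gradient f x - gradient f y‖ ≤ L * ‖x - y‖)
    {Ω : Type*} [MeasurableSpace Ω] (P : Measure Ω) [IsProbabilityMeasure P]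
    (𝓕 : Filtration ℕ ‹MeasurableSpace Ω›)
    (β₁ β₂ η lam σ : ℝ)
    (hβ₁ : β₁ ∈ Set.Ioo (0 : ℝ) 1) (hβ₂ : β₂ ∈ Set.Ioo (0 : ℝ) 1)
    (hη : 0 < η) (hlam : 0 < lam) (hσ : 0 < σ) (hηlam : η * lam ≤ 1)
    (g m c θ : ℕ → Ω → EuclideanSpace ℝ (Fin d))
    (hg_meas : ∀ k, 1 ≤ k → StronglyMeasurable[𝓕 k] (g k))
    (hg_L2 : ∀ k, 1 ≤ k → MemLp (g k) 2 P)
    (hcrec : ∀ k, 1 ≤ k → ∀ ω, c k ω = β₁ • m (k - 1) ω + (1 - β₁) • g k ω)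
    (hθrec : ∀ k, 1 ≤ k → ∀ ω,
      θ (k + 1) ω = θ k ω - η • (signVec (c k ω) + lam • θ k ω))
    (hmrec : ∀ k, 1 ≤ k → ∀ ω, m k ω = β₂ • m (k - 1) ω + (1 - β₂) • g k ω)
    (hm0 : ∀ ω, m 0 ω = g 1 ω)
    (θ₁ : EuclideanSpace ℝ (Fin d)) (hθ₁ : ∀ ω, θ 1 ω = θ₁)
    (hθ₁box : linfNorm θ₁ ≤ 1 / lam)
    (hunbiased : ∀ k, 1 ≤ k →
      P[g k | 𝓕 (k - 1)] =ᵐ[P] fun ω => gradient f (θ k ω))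
    (hvar : ∀ k, 1 ≤ k → ∀ᵐ ω ∂P,
      (P[fun ω' => ‖g k ω' - gradient f (θ k ω')‖ ^ 2 | 𝓕 (k - 1)]) ω ≤ σ ^ 2)
    : ∀ k, 1 ≤ k →
      ∫ ω, ‖c k ω - gradient f (θ k ω)‖ ∂P ≤
        β₂ ^ (k - 1) * σ + 2 * L * η * Real.sqrt d / (1 - β₂)
          + (|β₁ - β₂| + 1 - β₁) * σ / Real.sqrt (1 - β₂) := by
  obtain ⟨hβ₁0, hβ₁1⟩ := hβ₁
  obtain ⟨hβ₂0, hβ₂1⟩ := hβ₂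
  have h1β₂ : (0:ℝ) < 1 - β₂ := by linarith
  have hsd : (0:ℝ) ≤ Real.sqrt d := Real.sqrt_nonneg d
  set ξ : ℕ → Ω → EuclideanSpace ℝ (Fin d) := fun k ω => g k ω - gradient f (θ k ω) with hξdef
  set W : ℕ → Ω → EuclideanSpace ℝ (Fin d) := Wp β₂ ξ with hWdef
  -- L is nonnegative
  have hL0 : (0:ℝ) ≤ L := by
    have h1 := hL (EuclideanSpace.single (⟨0, hd⟩ : Fin d) (1:ℝ)) 0
    have h2 : ‖(EuclideanSpace.single (⟨0, hd⟩ : Fin d) (1:ℝ)) - 0‖ = 1 := by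
      rw [sub_zero, EuclideanSpace.norm_single, norm_one]
    rw [h2, mul_one] at h1
    exact le_trans (norm_nonneg _) h1
  have hCnn : (0:ℝ) ≤ 2 * L * η * Real.sqrt d := by positivity
  -- coordinatewise bound on θ
  have hθbox : ∀ k, 1 ≤ k → ∀ ω (i : Fin d), |θ k ω i| ≤ 1/lam := by
    intro k hk
    induction k, hk using Nat.le_induction with
    | base =>
      intro ω i
      rw [hθ₁ ω]
      refine le_trans ?_ hθ₁box
      have h := norm_le_pi_norm ((EuclideanSpace.equiv (Fin d) ℝ) θ₁) i
      rw [Real.norm_eq_abs] at h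
      exact h
    | succ k hk ih =>
      intro ω i
      rw [hθrec k hk ω]
      have hco : (θ k ω - η • (signVec (c k ω) + lam • θ k ω)) i
          = (1 - η*lam) * θ k ω i - η * Real.sign (c k ω i) := by
        simp only [PiLp.sub_apply, PiLp.smul_apply, PiLp.add_apply, signVec_apply,
          smul_eq_mul]
        ring
      rw [hco]
      have h1 := abs_le.1 (ih ω i)
      have h2 := abs_le.1 (sign_abs_le (c k ω i))
      have h3 : 0 ≤ 1 - η*lam := by nlinarith
      have h4 : (1 - η*lam) * (1/lam) + η = 1/lam := by
        field_simp
        ring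
      rw [abs_le]
      constructor
      · nlinarith [mul_le_mul_of_nonneg_left h1.1 h3, mul_le_mul_of_nonneg_left h2.2 hη.le]
      · nlinarith [mul_le_mul_of_nonneg_left h1.2 h3, mul_le_mul_of_nonneg_left h2.1 hη.le]
  -- gradient increments
  have hgradstep : ∀ k, 1 ≤ k → ∀ ω,
      ‖gradient f (θ k ω) - gradient f (θ (k+1) ω)‖ ≤ 2 * L * η * Real.sqrt d := by
    intro k hk ω
    have h1 : ‖θ (k+1) ω - θ k ω‖ ≤ Real.sqrt d * (2*η) := by
      rw [hθrec k hk ω]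
      have e : θ k ω - η • (signVec (c k ω) + lam • θ k ω) - θ k ω
          = (-η) • (signVec (c k ω) + lam • θ k ω) := by
        module
      rw [e]
      apply euclid_norm_le_of_coord _ _ (by positivity)
      intro i
      have hco : ((-η) • (signVec (c k ω) + lam • θ k ω)) i
          = (-η) * (Real.sign (c k ω i) + lam * θ k ω i) := by
        simp only [PiLp.smul_apply, PiLp.add_apply, signVec_apply, smul_eq_mul]
      rw [hco, abs_mul, abs_neg, abs_of_nonneg hη.le]
      have h2 := abs_le.1 (sign_abs_le (c k ω i))
      have h3 := abs_le.1 (hθbox k hk ω i)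
      have hinv : lam * (1/lam) = 1 := by field_simp
      have h4 : |Real.sign (c k ω i) + lam * θ k ω i| ≤ 2 := by
        rw [abs_le]
        constructor
        · nlinarith [mul_le_mul_of_nonneg_left h3.1 hlam.le, hinv]
        · nlinarith [mul_le_mul_of_nonneg_left h3.2 hlam.le, hinv]
      nlinarith
    calc ‖gradient f (θ k ω) - gradient f (θ (k+1) ω)‖
        ≤ L * ‖θ k ω - θ (k+1) ω‖ := hL _ _
      _ = L * ‖θ (k+1) ω - θ k ω‖ := by rw [norm_sub_rev]
      _ ≤ L * (Real.sqrt d * (2*η)) := mul_le_mul_of_nonneg_left h1 hL0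
      _ = 2 * L * η * Real.sqrt d := by ring
  -- bound on the predictable part
  have hVbound : ∀ k, ∀ ω, ‖m k ω - W k ω - gradient f (θ (k+1) ω)‖
      ≤ 2 * L * η * Real.sqrt d / (1 - β₂) := by
    intro k
    induction k with
    | zero =>
      intro ω
      have e : m 0 ω - W 0 ω - gradient f (θ 1 ω) = 0 := by
        show m 0 ω - (g 1 ω - gradient f (θ 1 ω)) - gradient f (θ 1 ω) = 0
        rw [hm0 ω]; abel
      rw [e, norm_zero]
      positivity
    | succ k ih =>
      intro ω
      have hrec : m (k+1) ω - W (k+1) ω - gradient f (θ (k+2) ω)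
          = β₂ • (m k ω - W k ω - gradient f (θ (k+1) ω))
            + (gradient f (θ (k+1) ω) - gradient f (θ (k+2) ω)) := by
        have h1 := hmrec (k+1) (by omega) ω
        simp only [Nat.add_sub_cancel] at h1
        have h2 : W (k+1) ω = β₂ • W k ω + (1-β₂) • ξ (k+1) ω := rfl
        have h3 : ξ (k+1) ω = g (k+1) ω - gradient f (θ (k+1) ω) := rfl
        rw [h1, h2, h3]
        module
      rw [hrec]
      have h4 := hgradstep (k+1) (by omega) ω
      calc ‖_ + _‖ ≤ β₂ * ‖m k ω - W k ω - gradient f (θ (k+1) ω)‖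
            + ‖gradient f (θ (k+1) ω) - gradient f (θ (k+2) ω)‖ := by
            refine (norm_add_le _ _).trans ?_
            rw [norm_smul, Real.norm_eq_abs, abs_of_nonneg hβ₂0.le]
        _ ≤ β₂ * (2 * L * η * Real.sqrt d / (1 - β₂)) + 2 * L * η * Real.sqrt d := by
            exact add_le_add (mul_le_mul_of_nonneg_left (ih ω) hβ₂0.le) h4
        _ = 2 * L * η * Real.sqrt d / (1 - β₂) := by
            field_simp
            ring
  -- decomposition of the error
  have hdecomp : ∀ k, 1 ≤ k → ∀ ω, c k ω - gradient f (θ k ω) =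
      (β₁ • W (k-1) ω + (1-β₁) • ξ k ω)
        + β₁ • (m (k-1) ω - W (k-1) ω - gradient f (θ k ω)) := by
    intro k hk ω
    rw [hcrec k hk ω]
    have h3 : ξ k ω = g k ω - gradient f (θ k ω) := rfl
    rw [h3]
    module
  -- measurability
  have hgradcont : Continuous (gradient f) := by
    have hlip : LipschitzWith (Real.toNNReal L) (gradient f) := by
      apply LipschitzWith.of_dist_le_mul
      intro x y
      rw [dist_eq_norm, dist_eq_norm]
      calc ‖gradient f x - gradient f y‖ ≤ L * ‖x - y‖ := hL x y
        _ = (Real.toNNReal L) * ‖x - y‖ := by rw [Real.coe_toNNReal L hL0]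
    exact hlip.continuous
  have hm_meas : ∀ k, StronglyMeasurable[𝓕 (max k 1)] (m k) := by
    intro k
    induction k with
    | zero =>
      have e : m 0 = g 1 := funext hm0
      rw [e]
      exact hg_meas 1 le_rfl
    | succ k ih =>
      have e : m (k+1) = fun ω => β₂ • m k ω + (1-β₂) • g (k+1) ω := by
        funext ω
        have := hmrec (k+1) (by omega) ω
        simpa using this
      rw [e, show max (k+1) 1 = k+1 by omega]
      exact ((ih.mono (𝓕.mono (by omega))).const_smul β₂).add
        ((hg_meas (k+1) (by omega)).const_smul (1-β₂))
  have hθm : ∀ k, 1 ≤ k → StronglyMeasurable[𝓕 (k-1)] (θ k) := by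
    intro k hk
    induction k, hk using Nat.le_induction with
    | base =>
      have e : θ 1 = fun _ => θ₁ := funext hθ₁
      rw [e]
      exact stronglyMeasurable_const
    | succ k hk ih =>
      show StronglyMeasurable[𝓕 k] (θ (k+1))
      have hθk : StronglyMeasurable[𝓕 k] (θ k) := ih.mono (𝓕.mono (Nat.sub_le k 1))
      have hck : StronglyMeasurable[𝓕 k] (c k) := by
        have e : c k = fun ω => β₁ • m (k-1) ω + (1-β₁) • g k ω := funext (hcrec k hk)
        rw [e]
        exact (((hm_meas (k-1)).mono (𝓕.mono (by omega))).const_smul β₁).add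
          ((hg_meas k hk).const_smul (1-β₁))
      have hsgn : StronglyMeasurable[𝓕 k] (fun ω => signVec (c k ω)) :=
        (measurable_signVec.comp hck.measurable).stronglyMeasurable
      have e : θ (k+1) = fun ω => θ k ω - η • (signVec (c k ω) + lam • θ k ω) :=
        funext (hθrec k hk)
      rw [e]
      exact hθk.sub ((hsgn.add (hθk.const_smul lam)).const_smul η)
  have hgradθm : ∀ k, 1 ≤ k →
      StronglyMeasurable[𝓕 (k-1)] (fun ω => gradient f (θ k ω)) := fun k hk =>
    hgradcont.comp_stronglyMeasurable (hθm k hk)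
  have hξm : ∀ k, 1 ≤ k → StronglyMeasurable[𝓕 k] (ξ k) := fun k hk =>
    (hg_meas k hk).sub ((hgradθm k hk).mono (𝓕.mono (Nat.sub_le k 1)))
  have hWm : ∀ k, 1 ≤ k → StronglyMeasurable[𝓕 k] (W k) := by
    intro k hk
    induction k, hk using Nat.le_induction with
    | base =>
      show StronglyMeasurable[𝓕 1] fun ω => β₂ • ξ 1 ω + (1-β₂) • ξ 1 ω
      exact ((hξm 1 le_rfl).const_smul β₂).add ((hξm 1 le_rfl).const_smul (1-β₂))
    | succ k hk ih =>
      show StronglyMeasurable[𝓕 (k+1)] fun ω => β₂ • W k ω + (1-β₂) • ξ (k+1) ω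
      exact ((ih.mono (𝓕.mono (by omega))).const_smul β₂).add
        ((hξm (k+1) (by omega)).const_smul (1-β₂))
  -- L² membership
  have hgradL2 : ∀ k, 1 ≤ k → MemLp (fun ω => gradient f (θ k ω)) 2 P := by
    intro k hk
    apply MemLp.of_bound (((hgradθm k hk).mono (𝓕.le _)).aestronglyMeasurable)
      (‖gradient f θ₁‖ + L * (2 * (Real.sqrt d / lam)))
    apply ae_of_all
    intro ω
    have hθn : ‖θ k ω‖ ≤ Real.sqrt d * (1/lam) :=
      euclid_norm_le_of_coord _ _ (by positivity) (hθbox k hk ω)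
    have hθ₁n : ‖θ₁‖ ≤ Real.sqrt d * (1/lam) := by
      apply euclid_norm_le_of_coord _ _ (by positivity)
      intro i
      refine le_trans ?_ hθ₁box
      have h := norm_le_pi_norm ((EuclideanSpace.equiv (Fin d) ℝ) θ₁) i
      rw [Real.norm_eq_abs] at h
      exact h
    have h5 : ‖θ k ω - θ₁‖ ≤ 2 * (Real.sqrt d / lam) := by
      refine (norm_sub_le _ _).trans ?_
      have : Real.sqrt d * (1/lam) = Real.sqrt d / lam := by ring
      rw [this] at hθn hθ₁n
      linarith
    calc ‖gradient f (θ k ω)‖ = ‖gradient f θ₁ + (gradient f (θ k ω) - gradient f θ₁)‖ := by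
          rw [add_sub_cancel]
      _ ≤ ‖gradient f θ₁‖ + ‖gradient f (θ k ω) - gradient f θ₁‖ := norm_add_le _ _
      _ ≤ ‖gradient f θ₁‖ + L * ‖θ k ω - θ₁‖ := by linarith [hL (θ k ω) θ₁]
      _ ≤ ‖gradient f θ₁‖ + L * (2 * (Real.sqrt d / lam)) := by
          nlinarith [mul_le_mul_of_nonneg_left h5 hL0]
  have hξL2 : ∀ k, 1 ≤ k → MemLp (ξ k) 2 P := fun k hk =>
    (hg_L2 k hk).sub (hgradL2 k hk)
  have hWL2 : ∀ k, MemLp (W k) 2 P := by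
    intro k
    induction k with
    | zero => exact hξL2 1 le_rfl
    | succ k ih =>
      show MemLp (fun ω => β₂ • W k ω + (1-β₂) • ξ (k+1) ω) 2 P
      exact (ih.const_smul β₂).add ((hξL2 (k+1) (by omega)).const_smul (1-β₂))
  have hmL2 : ∀ k, MemLp (m k) 2 P := by
    intro k
    induction k with
    | zero =>
      have e : m 0 = g 1 := funext hm0
      rw [e]; exact hg_L2 1 le_rfl
    | succ k ih =>
      have e : m (k+1) = fun ω => β₂ • m k ω + (1-β₂) • g (k+1) ω := by
        funext ω
        have := hmrec (k+1) (by omega) ω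
        simpa using this
      rw [e]
      exact (ih.const_smul β₂).add ((hg_L2 (k+1) (by omega)).const_smul (1-β₂))
  -- second moment of the noise
  have hξsq : ∀ k, 1 ≤ k → ∫ ω, ‖ξ k ω‖^2 ∂P ≤ σ^2 := by
    intro k hk
    have hint : Integrable (fun ω => ‖ξ k ω‖^2) P := (hξL2 k hk).norm.integrable_sq
    have hint' : Integrable (fun ω' => ‖g k ω' - gradient f (θ k ω')‖^2) P := hint
    calc ∫ ω, ‖ξ k ω‖^2 ∂P
        = ∫ ω, (P[fun ω' => ‖g k ω' - gradient f (θ k ω')‖^2 | 𝓕 (k-1)]) ω ∂P :=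
          (integral_condExp (𝓕.le (k-1))).symm
      _ ≤ ∫ _ω, σ^2 ∂P :=
          integral_mono_ae integrable_condExp (integrable_const _) (hvar k hk)
      _ = σ^2 := by simp
  -- conditional expectation of the noise vanishes
  have hξ0 : ∀ k, 1 ≤ k → P[ξ k | 𝓕 (k-1)] =ᵐ[P] 0 := by
    intro k hk
    have hgi : Integrable (g k) P := (hg_L2 k hk).integrable one_le_two
    have hgr : Integrable (fun ω => gradient f (θ k ω)) P :=
      (hgradL2 k hk).integrable one_le_two
    have h1 : P[ξ k | 𝓕 (k-1)]
        =ᵐ[P] P[g k | 𝓕 (k-1)] - P[fun ω => gradient f (θ k ω) | 𝓕 (k-1)] :=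
      condExp_sub hgi hgr _
    have h2 : P[fun ω => gradient f (θ k ω) | 𝓕 (k-1)] = fun ω => gradient f (θ k ω) :=
      condExp_of_stronglyMeasurable (𝓕.le (k-1)) (hgradθm k hk) hgr
    refine h1.trans ?_
    rw [h2]
    filter_upwards [hunbiased k hk] with ω hω
    simp only [Pi.sub_apply, Pi.zero_apply, hω, sub_self]
  -- orthogonality
  have horth : ∀ k, 1 ≤ k → ∀ X : Ω → EuclideanSpace ℝ (Fin d),
      StronglyMeasurable[𝓕 (k-1)] X → MemLp X 2 P →
      ∫ ω, ⟪X ω, ξ k ω⟫ ∂P = 0 := by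
    intro k hk X hXm hXL2
    have hinner : ∀ ω, ⟪X ω, ξ k ω⟫ = ∑ i, X ω i * ξ k ω i := by
      intro ω
      rw [PiLp.inner_apply]
      congr 1
      funext i
      rw [RCLike.inner_apply']
      rfl
    have hXi2 : ∀ i : Fin d, MemLp (fun ω => X ω i) 2 P := fun i =>
      (EuclideanSpace.proj (𝕜 := ℝ) i).comp_memLp' hXL2
    have hξi2 : ∀ i : Fin d, MemLp (fun ω => ξ k ω i) 2 P := fun i =>
      (EuclideanSpace.proj (𝕜 := ℝ) i).comp_memLp' (hξL2 k hk)
    have hprod : ∀ i : Fin d, Integrable (fun ω => X ω i * ξ k ω i) P := by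
      intro i
      have h1 : Integrable (fun ω => (X ω i)^2) P := (hXi2 i).integrable_sq
      have h2 : Integrable (fun ω => (ξ k ω i)^2) P := (hξi2 i).integrable_sq
      apply Integrable.mono' (h1.add h2)
        ((hXi2 i).aestronglyMeasurable.mul (hξi2 i).aestronglyMeasurable)
      apply ae_of_all
      intro ω
      have hb : |X ω i| * |ξ k ω i| ≤ (X ω i)^2 + (ξ k ω i)^2 := by
        nlinarith [sq_nonneg (|X ω i| - |ξ k ω i|), sq_abs (X ω i), sq_abs (ξ k ω i),
          abs_nonneg (X ω i), abs_nonneg (ξ k ω i)]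
      simpa [Real.norm_eq_abs, abs_mul] using hb
    simp_rw [hinner]
    rw [integral_finset_sum _ (fun i _ => hprod i)]
    apply Finset.sum_eq_zero
    intro i _
    have hXim : StronglyMeasurable[𝓕 (k-1)] (fun ω => X ω i) :=
      (EuclideanSpace.proj (𝕜 := ℝ) i).continuous.comp_stronglyMeasurable hXm
    have hξiInt : Integrable (fun ω => ξ k ω i) P := (hξi2 i).integrable one_le_two
    have hcond0 : P[fun ω => ξ k ω i | 𝓕 (k-1)] =ᵐ[P] 0 := by
      have h3 := condexp_clm (𝓕.le (k-1)) (EuclideanSpace.proj (𝕜 := ℝ) i)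
        ((hξL2 k hk).integrable one_le_two)
      refine h3.symm.trans ?_
      filter_upwards [hξ0 k hk] with ω hω
      rw [hω]
      simp
    have hpull := condExp_mul_of_stronglyMeasurable_left hXim (hprod i) hξiInt
    have hzero : P[fun ω => X ω i * ξ k ω i | 𝓕 (k-1)] =ᵐ[P] 0 := by
      refine hpull.trans ?_
      filter_upwards [hcond0] with ω hω
      simp only [Pi.mul_apply, Pi.zero_apply] at hω ⊢
      rw [hω, mul_zero]
    calc ∫ ω, X ω i * ξ k ω i ∂P
        = ∫ ω, (P[fun ω => X ω i * ξ k ω i | 𝓕 (k-1)]) ω ∂P :=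
          (integral_condExp (𝓕.le (k-1))).symm
      _ = ∫ _ω, (0:ℝ) ∂P := integral_congr_ae hzero
      _ = 0 := integral_zero _ _
  -- Pythagoras
  have hL2step : ∀ k, 1 ≤ k → ∀ X : Ω → EuclideanSpace ℝ (Fin d),
      StronglyMeasurable[𝓕 (k-1)] X → MemLp X 2 P → ∀ p q : ℝ,
      ∫ ω, ‖p • X ω + q • ξ k ω‖^2 ∂P
        = p^2 * ∫ ω, ‖X ω‖^2 ∂P + q^2 * ∫ ω, ‖ξ k ω‖^2 ∂P := by
    intro k hk X hXm hXL2 p q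
    have hXn2 : Integrable (fun ω => ‖X ω‖^2) P := hXL2.norm.integrable_sq
    have hξn2 : Integrable (fun ω => ‖ξ k ω‖^2) P := (hξL2 k hk).norm.integrable_sq
    have hip : Integrable (fun ω => ⟪X ω, ξ k ω⟫) P := by
      apply Integrable.mono' (hXn2.add hξn2)
        (hXL2.aestronglyMeasurable.inner (hξL2 k hk).aestronglyMeasurable)
      apply ae_of_all
      intro ω
      calc ‖⟪X ω, ξ k ω⟫‖ ≤ ‖X ω‖ * ‖ξ k ω‖ := norm_inner_le_norm _ _
        _ ≤ ‖X ω‖^2 + ‖ξ k ω‖^2 := by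
            nlinarith [sq_nonneg (‖X ω‖ - ‖ξ k ω‖), norm_nonneg (X ω), norm_nonneg (ξ k ω)]
    have hptw : ∀ ω, ‖p • X ω + q • ξ k ω‖^2
        = p^2*‖X ω‖^2 + (2*p*q)*⟪X ω, ξ k ω⟫ + q^2*‖ξ k ω‖^2 := by
      intro ω
      rw [norm_add_sq_real, norm_smul, norm_smul, real_inner_smul_left, real_inner_smul_right]
      rw [Real.norm_eq_abs, Real.norm_eq_abs, mul_pow, mul_pow, sq_abs, sq_abs]
      ring
    simp_rw [hptw]
    have hI1 : Integrable (fun ω => p^2*‖X ω‖^2) P := hXn2.const_mul _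
    have hI2 : Integrable (fun ω => (2*p*q)*⟪X ω, ξ k ω⟫) P := hip.const_mul _
    have hI12 : Integrable (fun ω => p^2*‖X ω‖^2 + (2*p*q)*⟪X ω, ξ k ω⟫) P := hI1.add hI2
    rw [integral_add hI12 (hξn2.const_mul (q^2)), integral_add hI1 hI2,
      integral_const_mul, integral_const_mul, integral_const_mul,
      horth k hk X hXm hXL2]
    ring
  -- second moment of W
  have hWsq : ∀ k, 1 ≤ k → ∫ ω, ‖W k ω‖^2 ∂P
      ≤ σ^2 * (β₂^(2*(k-1)) + (1-β₂)/(1+β₂) * (1 - β₂^(2*(k-1)))) := by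
    intro k hk
    induction k, hk using Nat.le_induction with
    | base =>
      have hW1 : W 1 = ξ 1 := by
        funext ω
        show β₂ • ξ 1 ω + (1-β₂) • ξ 1 ω = ξ 1 ω
        module
      rw [hW1]
      simpa using hξsq 1 le_rfl
    | succ k hk ih =>
      have hrec : ∫ ω, ‖W (k+1) ω‖^2 ∂P
          = β₂^2 * ∫ ω, ‖W k ω‖^2 ∂P + (1-β₂)^2 * ∫ ω, ‖ξ (k+1) ω‖^2 ∂P := by
        have h := hL2step (k+1) (by omega) (W k)
          (by simpa using hWm k hk) (hWL2 k) β₂ (1-β₂)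
        exact h
      rw [hrec]
      have h1 := hξsq (k+1) (by omega)
      have e : β₂^(2*((k+1)-1)) = β₂^2 * β₂^(2*(k-1)) := by
        rw [← pow_add]
        congr 1
        omega
      have hDid : (1-β₂)/(1+β₂)*(1-β₂^2) = (1-β₂)^2 := by
        field_simp
        ring
      simp only [Nat.add_sub_cancel] at e ⊢
      rw [e]
      nlinarith [mul_le_mul_of_nonneg_left ih (sq_nonneg β₂),
        mul_le_mul_of_nonneg_left h1 (sq_nonneg (1-β₂)), hDid, sq_nonneg σ,
        pow_nonneg hβ₂0.le (2*(k-1))]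
  -- main argument
  intro k hk
  have hannn : (0:ℝ) ≤ |β₁-β₂| + 1 - β₁ := by
    rcases le_or_gt β₂ β₁ with h|h
    · rw [abs_of_nonneg (by linarith)]; linarith
    · rw [abs_of_neg (by linarith)]; linarith
  rcases eq_or_lt_of_le hk with h1 | h2
  · -- k = 1
    have hc1 : ∀ ω, c 1 ω - gradient f (θ 1 ω) = ξ 1 ω := by
      intro ω
      rw [hcrec 1 le_rfl ω]
      show β₁ • m 0 ω + (1-β₁) • g 1 ω - gradient f (θ 1 ω)
          = g 1 ω - gradient f (θ 1 ω)
      rw [hm0 ω]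
      module
    rw [← h1]
    have e1 : ∫ ω, ‖c 1 ω - gradient f (θ 1 ω)‖ ∂P = ∫ ω, ‖ξ 1 ω‖ ∂P := by
      apply integral_congr_ae
      apply ae_of_all
      intro ω
      dsimp only
      rw [hc1 ω]
    rw [e1]
    have e2 : ∫ ω, ‖ξ 1 ω‖ ∂P ≤ σ :=
      le_trans (integral_norm_le_sqrt_integral_sq (hξL2 1 le_rfl))
        (le_trans (Real.sqrt_le_sqrt (hξsq 1 le_rfl)) (le_of_eq (Real.sqrt_sq hσ.le)))
    have e3 : (0:ℝ) ≤ 2*L*η*Real.sqrt d/(1-β₂) := by positivity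
    have e4 : (0:ℝ) ≤ (|β₁-β₂|+1-β₁) * σ / Real.sqrt (1-β₂) :=
      div_nonneg (mul_nonneg hannn hσ.le) (Real.sqrt_nonneg _)
    simp only [Nat.sub_self, pow_zero, one_mul]
    linarith
  · -- 2 ≤ k
    have hk2 : 2 ≤ k := h2
    have hk1 : 1 ≤ k - 1 := by omega
    set N : Ω → EuclideanSpace ℝ (Fin d) := fun ω => β₁ • W (k-1) ω + (1-β₁) • ξ k ω
      with hNdef
    have hWm' : StronglyMeasurable[𝓕 (k-1)] (W (k-1)) := hWm (k-1) hk1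
    have hNL2 : MemLp N 2 P :=
      ((hWL2 (k-1)).const_smul β₁).add ((hξL2 k hk).const_smul (1-β₁))
    have hNsq : ∫ ω, ‖N ω‖^2 ∂P
        = β₁^2 * ∫ ω, ‖W (k-1) ω‖^2 ∂P + (1-β₁)^2 * ∫ ω, ‖ξ k ω‖^2 ∂P :=
      hL2step k hk (W (k-1)) hWm' (hWL2 (k-1)) β₁ (1-β₁)
    set q := β₂^(k-2) with hq
    have hQq : β₂^(2*(k-1-1)) = q^2 := by
      rw [hq, ← pow_mul]
      congr 1
      omega
    have hq0 : 0 < q := pow_pos hβ₂0 _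
    have hq1 : q ≤ 1 := pow_le_one₀ hβ₂0.le hβ₂1.le
    have hWb := hWsq (k-1) hk1
    rw [hQq] at hWb
    have hξb := hξsq k hk
    have hNb : ∫ ω, ‖N ω‖^2 ∂P
        ≤ σ^2*(β₁^2*(q^2 + (1-β₂)/(1+β₂)*(1-q^2)) + (1-β₁)^2) := by
      rw [hNsq]
      nlinarith [mul_le_mul_of_nonneg_left hWb (sq_nonneg β₁),
        mul_le_mul_of_nonneg_left hξb (sq_nonneg (1-β₁))]
    have hkey := key_scalar_ineq β₁ β₂ q hβ₁0 hβ₁1 hβ₂0 hβ₂1 hq0 hq1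
    have hint1 : ∫ ω, ‖N ω‖ ∂P
        ≤ σ * (β₂*q + (|β₁-β₂|+1-β₁)/Real.sqrt (1-β₂)) := by
      calc ∫ ω, ‖N ω‖ ∂P ≤ Real.sqrt (∫ ω, ‖N ω‖^2 ∂P) :=
            integral_norm_le_sqrt_integral_sq hNL2
        _ ≤ Real.sqrt (σ^2*(β₁^2*(q^2 + (1-β₂)/(1+β₂)*(1-q^2)) + (1-β₁)^2)) :=
            Real.sqrt_le_sqrt hNb
        _ = σ * Real.sqrt (β₁^2*(q^2 + (1-β₂)/(1+β₂)*(1-q^2)) + (1-β₁)^2) := by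
            rw [Real.sqrt_mul (sq_nonneg σ), Real.sqrt_sq hσ.le]
        _ ≤ σ * (β₂*q + (|β₁-β₂|+1-β₁)/Real.sqrt (1-β₂)) :=
            mul_le_mul_of_nonneg_left hkey hσ.le
    have hptw : ∀ ω, ‖c k ω - gradient f (θ k ω)‖
        ≤ ‖N ω‖ + 2*L*η*Real.sqrt d/(1-β₂) := by
      intro ω
      rw [hdecomp k hk ω]
      refine (norm_add_le _ _).trans ?_
      apply add_le_add le_rfl
      rw [norm_smul, Real.norm_eq_abs, abs_of_nonneg hβ₁0.le]
      have hV := hVbound (k-1) ω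
      rw [show k-1+1 = k by omega] at hV
      calc β₁ * ‖m (k-1) ω - W (k-1) ω - gradient f (θ k ω)‖
          ≤ 1 * (2*L*η*Real.sqrt d/(1-β₂)) :=
            mul_le_mul hβ₁1.le hV (norm_nonneg _) zero_le_one
        _ = 2*L*η*Real.sqrt d/(1-β₂) := one_mul _
    have hNInt : Integrable (fun ω => ‖N ω‖) P := (hNL2.integrable one_le_two).norm
    have hcInt : Integrable (fun ω => ‖c k ω - gradient f (θ k ω)‖) P := by
      have hcL2 : MemLp (c k) 2 P := by
        have e : c k = fun ω => β₁ • m (k-1) ω + (1-β₁) • g k ω := funext (hcrec k hk)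
        rw [e]
        exact ((hmL2 (k-1)).const_smul β₁).add ((hg_L2 k hk).const_smul (1-β₁))
      exact ((hcL2.sub (hgradL2 k hk)).integrable one_le_two).norm
    have hpow : β₂ * β₂^(k-2) = β₂^(k-1) := by
      rw [← pow_succ']
      congr 1
      omega
    calc ∫ ω, ‖c k ω - gradient f (θ k ω)‖ ∂P
        ≤ ∫ ω, (‖N ω‖ + 2*L*η*Real.sqrt d/(1-β₂)) ∂P :=
          integral_mono hcInt (hNInt.add (integrable_const _)) hptw
      _ = (∫ ω, ‖N ω‖ ∂P) + 2*L*η*Real.sqrt d/(1-β₂) := by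
          rw [integral_add hNInt (integrable_const _), integral_const]
          simp
      _ ≤ σ * (β₂*q + (|β₁-β₂|+1-β₁)/Real.sqrt (1-β₂)) + 2*L*η*Real.sqrt d/(1-β₂) := by
          linarith
      _ = β₂^(k-1)*σ + 2*L*η*Real.sqrt d/(1-β₂) + (|β₁-β₂|+1-β₁)*σ/Real.sqrt (1-β₂) := by
          rw [hq, hpow]
          ring
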